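/- Let σ ≠ 0 and c ∈ ℝ, and for λ ≠ 0 define S(λ) = √(4 + σ²λ²), z(λ) = −(2 + S(λ))/λ + c, and Γ(λ) = 3/4 − σ²λ²/(4·(2 + S(λ))²). Then Γ(λ) − 1 < 0 and z′(λ) = −1/(λ²·(Γ(λ) − 1)) for every λ ≠ 0. -/

import Mathlib

/-- For `S(λ) = √(4 + σ²λ²)`, `z(λ) = −(2 + S(λ))/λ + c` and
`Γ(λ) = 3/4 − σ²λ²/(4(2 + S(λ))²)` (the form associated with the Higgs potential),
one has `Γ(λ) − 1 < 0` and `z′(λ) = −1/(λ²(Γ(λ) − 1))` for every `λ ≠ 0`. -/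
theorem z_solves_ODE_Higgs (σ c : ℝ) (hσ : σ ≠ 0) :
    let S : ℝ → ℝ := fun l => Real.sqrt (4 + σ^2*l^2)
    let z : ℝ → ℝ := fun l => -(2 + S l)/l + c
    let Γ : ℝ → ℝ := fun l => 3/4 - σ^2*l^2/(4*(2 + S l)^2)
    ∀ l : ℝ, l ≠ 0 →
      Γ l - 1 < 0 ∧ deriv z l = -1/(l^2*(Γ l - 1)) := by
  intro S z Γ l hl
  have hl2 : (0:ℝ) < l^2 := by positivity
  have hσl : (0:ℝ) < σ^2*l^2 := by positivity
  have hpos : (0:ℝ) < 4 + σ^2*l^2 := by linarith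
  set s : ℝ := Real.sqrt (4 + σ^2*l^2) with hs_def
  have hs2 : s^2 = 4 + σ^2*l^2 := Real.sq_sqrt hpos.le
  have hsgt : 2 < s := by
    nlinarith [Real.sqrt_nonneg (4 + σ^2*l^2)]
  have hspos : (0:ℝ) < s := by linarith
  have hΓ : Γ l - 1 < 0 := by
    have hd : (0:ℝ) < 4*(2 + s)^2 := by positivity
    have : 0 ≤ σ^2*l^2/(4*(2 + s)^2) := by positivity
    simp only [Γ]
    linarith [this]
  refine ⟨hΓ, ?_⟩
  have h1 : HasDerivAt (fun x : ℝ => 4 + σ^2*x^2) (σ^2*(2*l)) l := by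
    have := ((hasDerivAt_pow 2 l).const_mul (σ^2)).const_add 4
    simpa using this
  have hsd : HasDerivAt S (σ^2*(2*l)/(2*s)) l := h1.sqrt hpos.ne'
  have hf : HasDerivAt (fun x : ℝ => -(2 + S x)) (-(σ^2*(2*l)/(2*s))) l :=
    ((hsd.const_add 2).neg)
  have hz : HasDerivAt z ((-(σ^2*(2*l)/(2*s)) * l - -(2 + s) * 1)/l^2) l := by
    have := (hf.div (hasDerivAt_id l) hl).add_const c
    simpa [z, hs_def] using this
  rw [hz.deriv]
  have h2s : (2:ℝ) + s ≠ 0 := by linarith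
  have hΓval : Γ l - 1 = -s/(2*(2+s)) := by
    simp only [Γ, show S l = s from rfl]
    field_simp
    nlinarith [hs2]
  rw [hΓval]
  field_simp
  linear_combination hs2
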